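/- Let F be a field, k ≥ 1 a natural number, and G a k²×k² matrix over F, with rows and columns indexed by pairs (i,s) ∈ {1,...,k}×{1,...,k}, such that every square submatrix of G is invertible. Let m, m' : {1,...,k}×{1,...,k} → F be message vectors and set p = Gm, p' = Gm'. Fix i ∈ {1,...,k}. If m(j,s) = m'(j,s) for all j ≠ i and all s ∈ {1,...,k}, and p(j,k) = p'(j,k) for all j ∈ {1,...,k}, then m = m'. (In other words, in the clustered code where node N(1,j) of the first cluster stores the message block m_j = (m(j,1),...,m(j,k)) and node N(2,j) of the second cluster stores the parity block p_j = (p(j,1),...,p(j,k)), a failed systematic node N(1,i) is exactly regenerated from the full contents of the other k−1 systematic nodes together with one symbol p(j,k) from each of the k parity nodes.) -/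
import Mathlib


/-- Every square submatrix of `G` is invertible: for every size `r` and every
injective choice of `r` rows and `r` columns, the corresponding `r × r`
submatrix has nonzero determinant. -/
def AllSquareSubmatricesInvertible {F : Type*} [Field F] {ι : Type*} [DecidableEq ι]
    (G : Matrix ι ι F) : Prop :=
  ∀ (r : ℕ) (f g : Fin r → ι), Function.Injective f → Function.Injective g →
    (G.submatrix f g).det ≠ 0

/-- Exact regeneration of a failed systematic node `N(1,i)`: in Construction 1
for the `[2k,k,2]` clustered DSS with `ε = 1/(n-k)`, the message vector is
determined by the contents of the other `k-1` systematic nodes together with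
the last symbol `p(j,k)` of each of the `k` parity nodes. -/
theorem systematic_node_exact_regeneration
    {F : Type*} [Field F] {k : ℕ} (hk : 1 ≤ k)
    (G : Matrix (Fin k × Fin k) (Fin k × Fin k) F)
    (hG : AllSquareSubmatricesInvertible G)
    (m m' : Fin k × Fin k → F)
    (p p' : Fin k × Fin k → F)
    (hp : p = G.mulVec m) (hp' : p' = G.mulVec m')
    (i : Fin k)
    (hm : ∀ j : Fin k, j ≠ i → ∀ s : Fin k, m (j, s) = m' (j, s))
    (hpar : ∀ j : Fin k, p (j, ⟨k - 1, by omega⟩) = p' (j, ⟨k - 1, by omega⟩)) :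
    m = m' := by
  classical
  set e : Fin k := ⟨k - 1, by omega⟩ with he
  set v : Fin k → F := fun s => m (i, s) - m' (i, s) with hv
  set M : Matrix (Fin k) (Fin k) F :=
    G.submatrix (fun j => (j, e)) (fun s => (i, s)) with hM
  have hfinj : Function.Injective (fun j : Fin k => ((j, e) : Fin k × Fin k)) := by
    intro a b h; simpa using congrArg Prod.fst h
  have hginj : Function.Injective (fun s : Fin k => ((i, s) : Fin k × Fin k)) := by
    intro a b h; simpa using congrArg Prod.snd h
  have hdet : M.det ≠ 0 := hG k _ _ hfinj hginj
  have hMv : M.mulVec v = 0 := by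
    funext j
    have h1 := hpar j
    rw [hp, hp'] at h1
    have h0 : ∑ x : Fin k × Fin k, G (j, e) x * (m x - m' x) = 0 := by
      simp only [Matrix.mulVec, dotProduct] at h1
      simp [mul_sub, Finset.sum_sub_distrib, h1]
    rw [Fintype.sum_prod_type, Finset.sum_eq_single i] at h0
    · simpa [Matrix.mulVec, dotProduct, hM, hv] using h0
    · intro a _ ha
      apply Finset.sum_eq_zero
      intro b _
      rw [hm a ha b, sub_self, mul_zero]
    · intro h; exact absurd (Finset.mem_univ i) h
  have hv0 : v = 0 := Matrix.eq_zero_of_mulVec_eq_zero hdet hMv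
  funext x
  obtain ⟨a, b⟩ := x
  by_cases hai : a = i
  · subst hai
    have := congrFun hv0 b
    simpa [hv, sub_eq_zero] using this
  · exact hm a hai b
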